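/- Let Γ be a finite simple graph and let Γ' be obtained from Γ by identifying two nonadjacent distinct vertices u_1 and u_2 into a single vertex u_{12} (and then simplifying by removing duplicate parallel edges). Then the number of triangles in Γ' equals the number of triangles in Γ, plus the number of paths of length three from u_1 to u_2 in Γ no interior vertex of which is adjacent to both u_1 and u_2, minus the number of 4-vertex subsets {u_1, u_2, w_1, w_2} such that w_1, w_2 are adjacent to each other and each of w_1, w_2 is adjacent to both u_1 and u_2. -/

import Mathlib

open scoped Classical in
/-- The number of triangles (3-cliques) of a finite simple graph. -/
noncomputable def triangleCount {V : Type*} [Fintype V] (G : SimpleGraph V) : ℕ :=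
  (Finset.univ.filter fun t : Finset V =>
    t.card = 3 ∧ ∀ x ∈ t, ∀ y ∈ t, x ≠ y → G.Adj x y).card

open Finset

open scoped Classical in
/-- triangles through `v` correspond to edges in the neighborhood. -/
lemma tri_through_card' {V : Type*} [Fintype V] [DecidableEq V] (G : SimpleGraph V) (v : V) :
    (univ.filter fun t : Finset V =>
      (t.card = 3 ∧ ∀ x ∈ t, ∀ y ∈ t, x ≠ y → G.Adj x y) ∧ v ∈ t).card
    = (univ.filter fun s : Finset V =>
      s.card = 2 ∧ v ∉ s ∧ (∀ x ∈ s, ∀ y ∈ s, x ≠ y → G.Adj x y) ∧ ∀ w ∈ s, G.Adj v w).card := by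
  apply Finset.card_bij (fun t _ => t.erase v)
  · rintro t ht
    simp only [mem_filter, mem_univ, true_and] at ht ⊢
    obtain ⟨⟨hc, hcl⟩, hv⟩ := ht
    refine ⟨?_, notMem_erase _ _, ?_, ?_⟩
    · rw [card_erase_of_mem hv, hc]
    · intro x hx y hy hxy
      exact hcl x (mem_of_mem_erase hx) y (mem_of_mem_erase hy) hxy
    · intro w hw
      exact hcl v hv w (mem_of_mem_erase hw) (ne_of_mem_erase hw).symm
  · rintro t₁ h₁ t₂ h₂ h
    simp only [mem_filter, mem_univ, true_and] at h₁ h₂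
    rw [← insert_erase h₁.2, ← insert_erase h₂.2, h]
  · rintro s hs
    simp only [mem_filter, mem_univ, true_and] at hs
    obtain ⟨hc, hv, hcl, hadj⟩ := hs
    refine ⟨insert v s, ?_, erase_insert hv⟩
    simp only [mem_filter, mem_univ, true_and]
    refine ⟨⟨?_, ?_⟩, mem_insert_self v s⟩
    · rw [card_insert_of_notMem hv, hc]
    · intro x hx y hy hxy
      rcases mem_insert.mp hx with h1 | h1 <;> rcases mem_insert.mp hy with h2 | h2
      · exact absurd (h1.trans h2.symm) hxy
      · rw [h1]; exact hadj y h2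
      · rw [h2]; exact (hadj x h1).symm
      · exact hcl x h1 y h2 hxy

open scoped Classical in
lemma key_count' {V : Type*} [Fintype V] [DecidableEq V] (Γ : SimpleGraph V) (u₁ u₂ : V)
    (hne : u₁ ≠ u₂) (hnadj : ¬ Γ.Adj u₁ u₂) :
    (univ.filter fun s : Finset V => s.card = 2 ∧ (∀ x ∈ s, ∀ y ∈ s, x ≠ y → Γ.Adj x y) ∧
        ∀ w ∈ s, Γ.Adj u₁ w ∨ Γ.Adj u₂ w).card
    + (univ.filter fun s : Finset V => s.card = 2 ∧ (∀ x ∈ s, ∀ y ∈ s, x ≠ y → Γ.Adj x y) ∧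
        ∀ w ∈ s, Γ.Adj u₁ w ∧ Γ.Adj u₂ w).card
    = (univ.filter fun s : Finset V => s.card = 2 ∧ (∀ x ∈ s, ∀ y ∈ s, x ≠ y → Γ.Adj x y) ∧
        ∀ w ∈ s, Γ.Adj u₁ w).card
    + ((univ.filter fun s : Finset V => s.card = 2 ∧ (∀ x ∈ s, ∀ y ∈ s, x ≠ y → Γ.Adj x y) ∧
        ∀ w ∈ s, Γ.Adj u₂ w).card
    + (univ.filter fun s : Finset V => s.card = 2 ∧ (∀ x ∈ s, ∀ y ∈ s, x ≠ y → Γ.Adj x y) ∧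
        ∃ a ∈ s, Γ.Adj u₁ a ∧ ¬ Γ.Adj u₂ a ∧ ∃ b ∈ s, Γ.Adj u₂ b ∧ ¬ Γ.Adj u₁ b).card) := by
  simp only [Finset.card_filter]
  rw [← Finset.sum_add_distrib, ← Finset.sum_add_distrib, ← Finset.sum_add_distrib]
  apply Finset.sum_congr rfl
  intro s _
  by_cases h2 : s.card = 2
  swap
  · simp [h2]
  by_cases hcl : ∀ x ∈ s, ∀ y ∈ s, x ≠ y → Γ.Adj x y
  swap
  · simp [hcl]
  obtain ⟨a, b, hab, rfl⟩ := Finset.card_eq_two.mp h2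
  have hadj : Γ.Adj a b := hcl a (by simp) b (by simp) hab
  have pa2 : Γ.Adj u₁ a → a ≠ u₂ := fun h h' => hnadj (h' ▸ h)
  have pb2 : Γ.Adj u₁ b → b ≠ u₂ := fun h h' => hnadj (h' ▸ h)
  have ra1 : Γ.Adj u₂ a → a ≠ u₁ := fun h h' => hnadj ((h' ▸ h).symm)
  have rb1 : Γ.Adj u₂ b → b ≠ u₁ := fun h h' => hnadj ((h' ▸ h).symm)
  have pa1 : Γ.Adj u₁ a → a ≠ u₁ := fun h => (Γ.ne_of_adj h).symm
  have pb1 : Γ.Adj u₁ b → b ≠ u₁ := fun h => (Γ.ne_of_adj h).symm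
  have ra2 : Γ.Adj u₂ a → a ≠ u₂ := fun h => (Γ.ne_of_adj h).symm
  have rb2 : Γ.Adj u₂ b → b ≠ u₂ := fun h => (Γ.ne_of_adj h).symm
  by_cases hPa : Γ.Adj u₁ a <;> by_cases hPb : Γ.Adj u₁ b <;>
    by_cases hRa : Γ.Adj u₂ a <;> by_cases hRb : Γ.Adj u₂ b <;>
    simp_all

lemma filter_inst {α : Type*} (s : Finset α) (p : α → Prop)
    (h1 h2 : DecidablePred p) :
    @Finset.filter α p h1 s = @Finset.filter α p h2 s := by
  have : h1 = h2 := Subsingleton.elim h1 h2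
  rw [this]

lemma card_filter_congr' {α : Type*} [Fintype α] (p : α → Prop)
    (h1 h2 : DecidablePred p) :
    (@Finset.filter α p h1 univ).card = (@Finset.filter α p h2 univ).card := by
  have : h1 = h2 := Subsingleton.elim h1 h2
  rw [this]

open scoped Classical in
lemma filter_split_card' {α : Type*} [Fintype α] (p q : α → Prop) :
    (univ.filter p).card
      = (univ.filter fun a => p a ∧ q a).card + (univ.filter fun a => p a ∧ ¬ q a).card := by
  rw [← Finset.filter_filter, ← Finset.filter_filter,
    Finset.card_filter_add_card_filter_not]

open scoped Classical in
lemma no_u2' {V : Type*} [Fintype V] [DecidableEq V] (Γ : SimpleGraph V)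
    (u₁ u₂ : V) (Γ' : SimpleGraph V)
    (hΓ' : ∀ x y, Γ'.Adj x y ↔ x ≠ y ∧ x ≠ u₂ ∧ y ≠ u₂ ∧
      (Γ.Adj x y ∨ (x = u₁ ∧ Γ.Adj u₂ y) ∨ (y = u₁ ∧ Γ.Adj u₂ x))) :
    (univ.filter fun t : Finset V =>
        (t.card = 3 ∧ ∀ x ∈ t, ∀ y ∈ t, x ≠ y → Γ'.Adj x y) ∧ u₁ ∉ t)
    = (univ.filter fun t : Finset V =>
        ((t.card = 3 ∧ ∀ x ∈ t, ∀ y ∈ t, x ≠ y → Γ.Adj x y) ∧ u₁ ∉ t) ∧ u₂ ∉ t) := by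
  ext t
  simp only [mem_filter, mem_univ, true_and]
  constructor
  · rintro ⟨⟨h3, hcl⟩, hu1⟩
    have hu2 : u₂ ∉ t := by
      intro hu2
      obtain ⟨x, hx, hxne⟩ := Finset.exists_mem_ne (s := t) (by omega) u₂
      exact ((hΓ' x u₂).mp (hcl x hx u₂ hu2 hxne)).2.2.1 rfl
    refine ⟨⟨⟨h3, ?_⟩, hu1⟩, hu2⟩
    intro x hx y hy hxy
    rcases (hΓ' x y).mp (hcl x hx y hy hxy) with ⟨_, _, _, h | ⟨hx1, _⟩ | ⟨hy1, _⟩⟩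
    · exact h
    · exact absurd (hx1 ▸ hx) hu1
    · exact absurd (hy1 ▸ hy) hu1
  · rintro ⟨⟨⟨h3, hcl⟩, hu1⟩, hu2⟩
    refine ⟨⟨h3, ?_⟩, hu1⟩
    intro x hx y hy hxy
    exact (hΓ' x y).mpr ⟨hxy, fun h => hu2 (h ▸ hx), fun h => hu2 (h ▸ hy),
      Or.inl (hcl x hx y hy hxy)⟩

open scoped Classical in
lemma no_both' {V : Type*} [Fintype V] [DecidableEq V] (Γ : SimpleGraph V)
    (u₁ u₂ : V) (hne : u₁ ≠ u₂) (hnadj : ¬ Γ.Adj u₁ u₂) :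
    (univ.filter fun t : Finset V =>
        ((t.card = 3 ∧ ∀ x ∈ t, ∀ y ∈ t, x ≠ y → Γ.Adj x y) ∧ u₁ ∉ t) ∧ u₂ ∈ t)
    = (univ.filter fun t : Finset V =>
        (t.card = 3 ∧ ∀ x ∈ t, ∀ y ∈ t, x ≠ y → Γ.Adj x y) ∧ u₂ ∈ t) := by
  ext t
  simp only [mem_filter, mem_univ, true_and]
  constructor
  · rintro ⟨⟨h, _⟩, h2⟩
    exact ⟨h, h2⟩
  · rintro ⟨⟨h3, hcl⟩, h2⟩
    exact ⟨⟨⟨h3, hcl⟩, fun hu1 => hnadj (hcl u₁ hu1 u₂ h2 hne)⟩, h2⟩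

open scoped Classical in
lemma A_eq' {V : Type*} [Fintype V] [DecidableEq V] (Γ : SimpleGraph V)
    (u₁ u₂ : V) (hne : u₁ ≠ u₂) (hnadj : ¬ Γ.Adj u₁ u₂) (Γ' : SimpleGraph V)
    (hΓ' : ∀ x y, Γ'.Adj x y ↔ x ≠ y ∧ x ≠ u₂ ∧ y ≠ u₂ ∧
      (Γ.Adj x y ∨ (x = u₁ ∧ Γ.Adj u₂ y) ∨ (y = u₁ ∧ Γ.Adj u₂ x))) :
    (univ.filter fun s : Finset V =>
        s.card = 2 ∧ u₁ ∉ s ∧ (∀ x ∈ s, ∀ y ∈ s, x ≠ y → Γ'.Adj x y) ∧ ∀ w ∈ s, Γ'.Adj u₁ w)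
    = (univ.filter fun s : Finset V =>
        s.card = 2 ∧ (∀ x ∈ s, ∀ y ∈ s, x ≠ y → Γ.Adj x y) ∧
          ∀ w ∈ s, Γ.Adj u₁ w ∨ Γ.Adj u₂ w) := by
  ext s
  simp only [mem_filter, mem_univ, true_and]
  constructor
  · rintro ⟨h2, hu1, hcl, hin⟩
    have hw : ∀ w ∈ s, (Γ.Adj u₁ w ∨ Γ.Adj u₂ w) ∧ w ≠ u₂ ∧ w ≠ u₁ := by
      intro w hw
      obtain ⟨hne', _, hwu2, hor⟩ := (hΓ' u₁ w).mp (hin w hw)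
      have hwu1 : w ≠ u₁ := fun e => hu1 (e ▸ hw)
      rcases hor with h | ⟨_, h⟩ | ⟨hw1, _⟩
      · exact ⟨Or.inl h, hwu2, hwu1⟩
      · exact ⟨Or.inr h, hwu2, hwu1⟩
      · exact absurd hw1 hwu1
    refine ⟨h2, ?_, fun w hw' => (hw w hw').1⟩
    intro x hx y hy hxy
    rcases (hΓ' x y).mp (hcl x hx y hy hxy) with ⟨_, _, _, h | ⟨hx1, _⟩ | ⟨hy1, _⟩⟩
    · exact h
    · exact absurd hx1 (hw x hx).2.2
    · exact absurd hy1 (hw y hy).2.2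
  · rintro ⟨h2, hcl, hor⟩
    have hne12 : ∀ w ∈ s, w ≠ u₁ ∧ w ≠ u₂ := by
      intro w hw
      rcases hor w hw with h | h
      · exact ⟨(Γ.ne_of_adj h).symm, fun e => hnadj (e ▸ h)⟩
      · exact ⟨fun e => hnadj (Γ.adj_symm (e ▸ h)), (Γ.ne_of_adj h).symm⟩
    refine ⟨h2, fun hu1 => (hne12 u₁ hu1).1 rfl, ?_, ?_⟩
    · intro x hx y hy hxy
      exact (hΓ' x y).mpr ⟨hxy, (hne12 x hx).2, (hne12 y hy).2,
        Or.inl (hcl x hx y hy hxy)⟩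
    · intro w hw
      rcases hor w hw with h | h
      · exact (hΓ' u₁ w).mpr ⟨Γ.ne_of_adj h, hne, (hne12 w hw).2, Or.inl h⟩
      · exact (hΓ' u₁ w).mpr ⟨fun e => (hne12 w hw).1 e.symm, hne, (hne12 w hw).2,
          Or.inr (Or.inl ⟨rfl, h⟩)⟩

open scoped Classical in
lemma P_eq' {V : Type*} [Fintype V] [DecidableEq V] (Γ : SimpleGraph V) (v : V) :
    (univ.filter fun s : Finset V =>
        s.card = 2 ∧ v ∉ s ∧ (∀ x ∈ s, ∀ y ∈ s, x ≠ y → Γ.Adj x y) ∧ ∀ w ∈ s, Γ.Adj v w)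
    = (univ.filter fun s : Finset V =>
        s.card = 2 ∧ (∀ x ∈ s, ∀ y ∈ s, x ≠ y → Γ.Adj x y) ∧ ∀ w ∈ s, Γ.Adj v w) := by
  ext s
  simp only [mem_filter, mem_univ, true_and]
  constructor
  · rintro ⟨h2, _, hcl, hv⟩
    exact ⟨h2, hcl, hv⟩
  · rintro ⟨h2, hcl, hv⟩
    exact ⟨h2, fun hvs => Γ.irrefl (hv v hvs), hcl, hv⟩

open scoped Classical in
lemma Q_eq' {V : Type*} [Fintype V] [DecidableEq V] (Γ : SimpleGraph V) (u₁ u₂ : V) :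
    (univ.filter fun p : V × V =>
      Γ.Adj u₁ p.1 ∧ Γ.Adj p.1 p.2 ∧ Γ.Adj p.2 u₂ ∧
        ¬ Γ.Adj p.1 u₂ ∧ ¬ Γ.Adj p.2 u₁).card
    = (univ.filter fun s : Finset V =>
        s.card = 2 ∧ (∀ x ∈ s, ∀ y ∈ s, x ≠ y → Γ.Adj x y) ∧
          ∃ a ∈ s, Γ.Adj u₁ a ∧ ¬ Γ.Adj u₂ a ∧ ∃ b ∈ s, Γ.Adj u₂ b ∧ ¬ Γ.Adj u₁ b).card := by
  apply Finset.card_bij (fun p _ => ({p.1, p.2} : Finset V))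
  · rintro ⟨a, b⟩ h
    simp only [mem_filter, mem_univ, true_and] at h ⊢
    obtain ⟨h1, h2, h3, h4, h5⟩ := h
    have hab : a ≠ b := Γ.ne_of_adj h2
    refine ⟨Finset.card_pair hab, ?_, ?_⟩
    · intro x hx y hy hxy
      rcases Finset.mem_insert.mp hx with e1 | e1 <;>
        rcases Finset.mem_insert.mp hy with e2 | e2 <;>
        (try simp only [Finset.mem_singleton] at *)
      · exact absurd (e1.trans e2.symm) hxy
      · rw [e1, e2]; exact h2
      · rw [e1, e2]; exact h2.symm
      · exact absurd (e1.trans e2.symm) hxy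
    · exact ⟨a, by simp, h1, fun h => h4 h.symm, b, by simp, h3.symm, fun h => h5 h.symm⟩
  · rintro ⟨a, b⟩ ha ⟨c, d⟩ hc h
    simp only [mem_filter, mem_univ, true_and] at ha hc
    have hab : a ≠ b := Γ.ne_of_adj ha.2.1
    have hac : a = c := by
      have : a ∈ ({c, d} : Finset V) := h ▸ (by simp)
      rcases Finset.mem_insert.mp this with e | e
      · exact e
      · exact absurd ((Finset.mem_singleton.mp e) ▸ ha.1).symm hc.2.2.2.2
    have hbd : b = d := by
      have : b ∈ ({c, d} : Finset V) := h ▸ (by simp)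
      rcases Finset.mem_insert.mp this with e | e
      · exact absurd (e.trans hac.symm) (Ne.symm hab)
      · exact Finset.mem_singleton.mp e
    rw [Prod.ext_iff]; exact ⟨hac, hbd⟩
  · intro s hs
    simp only [mem_filter, mem_univ, true_and] at hs
    obtain ⟨h2, hcl, a, ha, hP, hnR, b, hb, hR, hnP⟩ := hs
    have hab : a ≠ b := fun e => hnP (e ▸ hP)
    refine ⟨(a, b), ?_, ?_⟩
    · simp only [mem_filter, mem_univ, true_and]
      exact ⟨hP, hcl a ha b hb hab, hR.symm, fun h => hnR h.symm, fun h => hnP h.symm⟩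
    · exact Finset.eq_of_subset_of_card_le
        (by intro x hx; rcases Finset.mem_insert.mp hx with e | e
            · exact e ▸ ha
            · exact (Finset.mem_singleton.mp e) ▸ hb)
        (by rw [h2, Finset.card_pair hab])

open scoped Classical in
lemma S_eq' {V : Type*} [Fintype V] [DecidableEq V] (Γ : SimpleGraph V) (u₁ u₂ : V) :
    (univ.filter fun s : Finset V =>
      s.card = 2 ∧ (∀ w ∈ s, Γ.Adj u₁ w ∧ Γ.Adj u₂ w) ∧
        ∀ x ∈ s, ∀ y ∈ s, x ≠ y → Γ.Adj x y)
    = (univ.filter fun s : Finset V =>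
      s.card = 2 ∧ (∀ x ∈ s, ∀ y ∈ s, x ≠ y → Γ.Adj x y) ∧
        ∀ w ∈ s, Γ.Adj u₁ w ∧ Γ.Adj u₂ w) := by
  ext s
  simp only [mem_filter, mem_univ, true_and]
  tauto

open scoped Classical in
lemma main' {V : Type*} [Fintype V] [DecidableEq V]
    (Γ : SimpleGraph V)
    (u₁ u₂ : V) (hne : u₁ ≠ u₂) (hnadj : ¬ Γ.Adj u₁ u₂)
    (Γ' : SimpleGraph V)
    (hΓ' : ∀ x y, Γ'.Adj x y ↔ x ≠ y ∧ x ≠ u₂ ∧ y ≠ u₂ ∧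
      (Γ.Adj x y ∨ (x = u₁ ∧ Γ.Adj u₂ y) ∨ (y = u₁ ∧ Γ.Adj u₂ x)))
    (Q S : ℕ)
    (hQ : Q = (Finset.univ.filter fun p : V × V =>
      Γ.Adj u₁ p.1 ∧ Γ.Adj p.1 p.2 ∧ Γ.Adj p.2 u₂ ∧
        ¬ Γ.Adj p.1 u₂ ∧ ¬ Γ.Adj p.2 u₁).card)
    (hS : S = (Finset.univ.filter fun s : Finset V =>
      s.card = 2 ∧ (∀ w ∈ s, Γ.Adj u₁ w ∧ Γ.Adj u₂ w) ∧
        ∀ x ∈ s, ∀ y ∈ s, x ≠ y → Γ.Adj x y).card) :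
    (triangleCount Γ' : ℤ) = (triangleCount Γ : ℤ) + (Q : ℤ) - (S : ℤ) := by
  -- split the triangle count of Γ' at u₁
  have e1 : triangleCount Γ'
      = (univ.filter fun t : Finset V =>
          (t.card = 3 ∧ ∀ x ∈ t, ∀ y ∈ t, x ≠ y → Γ'.Adj x y) ∧ u₁ ∈ t).card
      + (univ.filter fun t : Finset V =>
          (t.card = 3 ∧ ∀ x ∈ t, ∀ y ∈ t, x ≠ y → Γ'.Adj x y) ∧ u₁ ∉ t).card := by
    have h := filter_split_card' (fun t : Finset V =>
      t.card = 3 ∧ ∀ x ∈ t, ∀ y ∈ t, x ≠ y → Γ'.Adj x y) (fun t => u₁ ∈ t)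
    convert h using 3
    · unfold triangleCount
      exact congrArg Finset.card (filter_inst _ _ _ _)
    · exact filter_inst _ _ _ _
    · exact filter_inst _ _ _ _
  -- split the triangle count of Γ at u₁
  have e2 : triangleCount Γ
      = (univ.filter fun t : Finset V =>
          (t.card = 3 ∧ ∀ x ∈ t, ∀ y ∈ t, x ≠ y → Γ.Adj x y) ∧ u₁ ∈ t).card
      + (univ.filter fun t : Finset V =>
          (t.card = 3 ∧ ∀ x ∈ t, ∀ y ∈ t, x ≠ y → Γ.Adj x y) ∧ u₁ ∉ t).card := by
    have h := filter_split_card' (fun t : Finset V =>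
      t.card = 3 ∧ ∀ x ∈ t, ∀ y ∈ t, x ≠ y → Γ.Adj x y) (fun t => u₁ ∈ t)
    convert h using 3
    · unfold triangleCount
      exact congrArg Finset.card (filter_inst _ _ _ _)
    · exact filter_inst _ _ _ _
    · exact filter_inst _ _ _ _
  -- split the u₁-free part at u₂
  have e3 : (univ.filter fun t : Finset V =>
          (t.card = 3 ∧ ∀ x ∈ t, ∀ y ∈ t, x ≠ y → Γ.Adj x y) ∧ u₁ ∉ t).card
      = (univ.filter fun t : Finset V =>
          ((t.card = 3 ∧ ∀ x ∈ t, ∀ y ∈ t, x ≠ y → Γ.Adj x y) ∧ u₁ ∉ t) ∧ u₂ ∈ t).card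
      + (univ.filter fun t : Finset V =>
          ((t.card = 3 ∧ ∀ x ∈ t, ∀ y ∈ t, x ≠ y → Γ.Adj x y) ∧ u₁ ∉ t) ∧ u₂ ∉ t).card := by
    have h := filter_split_card' (fun t : Finset V =>
      ((t.card = 3 ∧ ∀ x ∈ t, ∀ y ∈ t, x ≠ y → Γ.Adj x y) ∧ u₁ ∉ t)) (fun t => u₂ ∈ t)
    convert h using 3
    · exact filter_inst _ _ _ _
    · exact filter_inst _ _ _ _
  rw [no_u2' Γ u₁ u₂ Γ' hΓ', tri_through_card' Γ' u₁, A_eq' Γ u₁ u₂ hne hnadj Γ' hΓ'] at e1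
  rw [tri_through_card' Γ u₁, P_eq' Γ u₁] at e2
  rw [no_both' Γ u₁ u₂ hne hnadj, tri_through_card' Γ u₂, P_eq' Γ u₂] at e3
  have key := key_count' Γ u₁ u₂ hne hnadj
  rw [hQ, Q_eq' Γ u₁ u₂] at *
  rw [hS, S_eq' Γ u₁ u₂] at *
  omega

/-- Identifying two nonadjacent vertices `u₁, u₂` of a simple graph `Γ` (and
simplifying) changes the triangle count by `+Q - S`, where `Q` is the number
of paths of length three from `u₁` to `u₂` no interior vertex of which is
adjacent to both `u₁` and `u₂`, and `S` is the number of 4-vertex subsets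
`{u₁, u₂, w₁, w₂}` with `w₁ ~ w₂` and each of `w₁, w₂` adjacent to both `u₁`
and `u₂`.  The identified graph `Γ'` is realized on the same vertex set, with
`u₂` made isolated and its adjacencies transferred to `u₁`. -/
theorem triangleCount_identify {V : Type*} [Fintype V] [DecidableEq V]
    (Γ : SimpleGraph V) [DecidableRel Γ.Adj]
    (u₁ u₂ : V) (hne : u₁ ≠ u₂) (hnadj : ¬ Γ.Adj u₁ u₂)
    (Γ' : SimpleGraph V)
    (hΓ' : ∀ x y, Γ'.Adj x y ↔ x ≠ y ∧ x ≠ u₂ ∧ y ≠ u₂ ∧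
      (Γ.Adj x y ∨ (x = u₁ ∧ Γ.Adj u₂ y) ∨ (y = u₁ ∧ Γ.Adj u₂ x)))
    (Q S : ℕ)
    (hQ : Q = (Finset.univ.filter fun p : V × V =>
      Γ.Adj u₁ p.1 ∧ Γ.Adj p.1 p.2 ∧ Γ.Adj p.2 u₂ ∧
        ¬ Γ.Adj p.1 u₂ ∧ ¬ Γ.Adj p.2 u₁).card)
    (hS : S = (Finset.univ.filter fun s : Finset V =>
      s.card = 2 ∧ (∀ w ∈ s, Γ.Adj u₁ w ∧ Γ.Adj u₂ w) ∧
        ∀ x ∈ s, ∀ y ∈ s, x ≠ y → Γ.Adj x y).card) :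
    (triangleCount Γ' : ℤ) = (triangleCount Γ : ℤ) + (Q : ℤ) - (S : ℤ) := by
  exact main' Γ u₁ u₂ hne hnadj Γ' hΓ' Q S
    (hQ.trans (card_filter_congr' _ _ _)) (hS.trans (card_filter_congr' _ _ _))
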